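/- Let P be a finite Eulerian poset of rank d, let B be a B-family for P, and let B* be a B-family for the dual poset P* (the same set with the order reversed). Then B(P; u, v) = (-u)^d · B*(P*; u^{-1}, v) as an identity in the Laurent polynomial ring ℤ[u^{±1}, v^{±1}], where B(P; u, v) denotes the polynomial assigned to the full interval [0̂, 1̂]. -/

import Mathlib

open scoped Classical

/-- The ring `ℤ[u^{±1}, v^{±1}]` of Laurent polynomials in two variables,
realized as Laurent polynomials over Laurent polynomials. -/
abbrev LaurentTwo := LaurentPolynomial (LaurentPolynomial ℤ)

/-- The variable `u`. -/
noncomputable def Uvar : LaurentTwo := LaurentPolynomial.C (LaurentPolynomial.T 1)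

/-- The variable `v`. -/
noncomputable def Vvar : LaurentTwo := LaurentPolynomial.T 1

/-- The inverse variable `u⁻¹`. -/
noncomputable def UvarInv : LaurentTwo := LaurentPolynomial.C (LaurentPolynomial.T (-1))

/-- The inverse variable `v⁻¹`. -/
noncomputable def VvarInv : LaurentTwo := LaurentPolynomial.T (-1)

/-- Substitution of the values `p` for `u` (variable `0`) and `q` for `v`
(variable `1`) in a polynomial of `ℤ[u,v]`, landing in `ℤ[u^{±1}, v^{±1}]`. -/
noncomputable def substUV (p q : LaurentTwo) (B : MvPolynomial (Fin 2) ℤ) : LaurentTwo :=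
  MvPolynomial.aeval (fun i : Fin 2 => if i = 0 then p else q) B

namespace BDualAux

open LaurentPolynomial

/-- outer `T` as a monoid hom. -/
noncomputable def Tout : Multiplicative ℤ →* LaurentTwo where
  toFun n := T (Multiplicative.toAdd n)
  map_one' := T_zero
  map_mul' a b := T_add _ _

/-- the ring hom `u ↦ u⁻¹`, `v ↦ v`. -/
noncomputable def σh : LaurentTwo →+* LaurentTwo :=
  AddMonoidAlgebra.liftNCRingHom
    ((LaurentPolynomial.C).comp (invert (R := ℤ)).toAlgHom.toRingHom) Tout
    (fun _ _ => Commute.all _ _)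

lemma σh_single (n : ℤ) (r : LaurentPolynomial ℤ) :
    σh (AddMonoidAlgebra.single n r) = AddMonoidAlgebra.single n (invert r) := by
  rw [σh, AddMonoidAlgebra.liftNCRingHom_single]
  show LaurentPolynomial.C (invert r) * T n = _
  rw [← single_eq_C_mul_T]

lemma σh_C (r : LaurentPolynomial ℤ) : σh (LaurentPolynomial.C r) = LaurentPolynomial.C (invert r) := by
  have h0 : (LaurentPolynomial.C r : LaurentTwo) = AddMonoidAlgebra.single 0 r := by
    rw [single_eq_C_mul_T, T_zero, mul_one]
  have h1 : (LaurentPolynomial.C (invert r) : LaurentTwo) = AddMonoidAlgebra.single 0 (invert r) := by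
    rw [single_eq_C_mul_T, T_zero, mul_one]
  rw [h0, h1, σh_single]

lemma σh_T (n : ℤ) : σh (T n : LaurentTwo) = T n := by
  have h0 : (T n : LaurentTwo) = AddMonoidAlgebra.single n 1 := by
    rw [single_eq_C_mul_T, map_one, one_mul]
  rw [h0, σh_single, map_one, ← h0]

/-- the ring hom `u ↦ u⁻¹`, `v ↦ v⁻¹`. -/
noncomputable def ιh : LaurentTwo →+* LaurentTwo :=
  σh.comp (invert (R := LaurentPolynomial ℤ)).toAlgHom.toRingHom

@[simp] lemma σh_Uvar : σh Uvar = UvarInv := by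
  rw [Uvar, σh_C, invert_T]; rfl
@[simp] lemma σh_UvarInv : σh UvarInv = Uvar := by
  rw [UvarInv, σh_C, invert_T]; rfl
@[simp] lemma σh_Vvar : σh Vvar = Vvar := σh_T 1
@[simp] lemma σh_VvarInv : σh VvarInv = VvarInv := σh_T (-1)

@[simp] lemma ιh_Uvar : ιh Uvar = UvarInv := by
  show σh (invert Uvar) = _
  rw [Uvar, invert_C, ← Uvar, σh_Uvar]
@[simp] lemma ιh_UvarInv : ιh UvarInv = Uvar := by
  show σh (invert UvarInv) = _
  rw [UvarInv, invert_C, ← UvarInv, σh_UvarInv]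
@[simp] lemma ιh_Vvar : ιh Vvar = VvarInv := by
  show σh (invert Vvar) = _
  rw [Vvar, invert_T, ← VvarInv, σh_VvarInv]
@[simp] lemma ιh_VvarInv : ιh VvarInv = Vvar := by
  show σh (invert VvarInv) = _
  rw [VvarInv, invert_T, neg_neg, ← Vvar, σh_Vvar]

lemma σh_apply (f : LaurentTwo) (e : ℤ) : (σh f).coeff e = invert (f.coeff e) := by
  induction f using AddMonoidAlgebra.induction_linear with
  | zero => simp
  | add f g hf hg =>
    rw [map_add]
    rw [AddMonoidAlgebra.coeff_add, AddMonoidAlgebra.coeff_add, Finsupp.add_apply,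
      Finsupp.add_apply, hf, hg, map_add]
  | single n r =>
    rw [σh_single, AddMonoidAlgebra.coeff_single, AddMonoidAlgebra.coeff_single,
      Finsupp.single_apply, Finsupp.single_apply]
    split <;> simp

lemma ιh_apply (f : LaurentTwo) (e : ℤ) : (ιh f).coeff e = invert (f.coeff (-e)) := by
  show (σh (invert f)).coeff e = _
  rw [σh_apply, invert_apply]

lemma ιh_injective : Function.Injective ιh := by
  intro f g h
  apply LaurentPolynomial.ext
  intro e
  have := congrArg (fun x : LaurentTwo => x.coeff (-e)) h
  simp only [ιh_apply, neg_neg] at this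
  exact (invert (R := ℤ)).injective this

lemma subst_hom (φ : LaurentTwo →+* LaurentTwo) (p q : LaurentTwo) (B : MvPolynomial (Fin 2) ℤ) :
    φ (substUV p q B) = substUV (φ p) (φ q) B := by
  unfold substUV
  rw [MvPolynomial.aeval_def, MvPolynomial.aeval_def, MvPolynomial.eval₂_comp_left]
  congr 1
  · exact RingHom.ext_int _ _
  · funext i
    by_cases h : i = 0 <;> simp [h]

lemma hUU : Uvar * UvarInv = 1 := by
  rw [Uvar, UvarInv, ← map_mul, ← T_add]
  norm_num

lemma hVV : Vvar * VvarInv = 1 := by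
  rw [Vvar, VvarInv, ← T_add]
  norm_num


lemma C_eq_single (r : LaurentPolynomial ℤ) :
    (LaurentPolynomial.C r : LaurentTwo) = AddMonoidAlgebra.single 0 r := by
  rw [single_eq_C_mul_T, T_zero, mul_one]

lemma T_eq_single (n : ℤ) : (T n : LaurentTwo) = AddMonoidAlgebra.single n 1 := by
  rw [single_eq_C_mul_T, map_one, one_mul]

lemma Cmul_coeff (r : LaurentPolynomial ℤ) (f : LaurentTwo) (e : ℤ) :
    (LaurentPolynomial.C r * f).coeff e = r * f.coeff e := by
  rw [C_eq_single]
  exact AddMonoidAlgebra.coeff_single_zero_mul f r e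

lemma Tmul_coeff (n : ℤ) (f : LaurentTwo) (e : ℤ) :
    ((T n : LaurentTwo) * f).coeff e = f.coeff (e - n) := by
  rw [T_eq_single, AddMonoidAlgebra.coeff_single_mul_apply, one_mul, neg_add_eq_sub]

lemma Uvar_pow (n : ℕ) : Uvar ^ n = LaurentPolynomial.C (T (n : ℤ)) := by
  rw [Uvar, ← map_pow, T_pow, mul_one]

lemma Vvar_pow (n : ℕ) : Vvar ^ n = (T (n : ℤ) : LaurentTwo) := by
  rw [Vvar, T_pow, mul_one]

lemma intCast_eq (c : ℤ) :
    (algebraMap ℤ LaurentTwo) c = LaurentPolynomial.C (LaurentPolynomial.C c) := by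
  have h := eq_intCast ((LaurentPolynomial.C (R := LaurentPolynomial ℤ)).comp
    (LaurentPolynomial.C (R := ℤ))) c
  simp only [RingHom.coe_comp, Function.comp_apply] at h
  rw [eq_intCast (algebraMap ℤ LaurentTwo) c, ← h]

lemma subst_C_coeff_eq_zero (p : LaurentPolynomial ℤ) (B : MvPolynomial (Fin 2) ℤ) (e : ℤ)
    (he : (B.degreeOf 1 : ℤ) < e) :
    (substUV (LaurentPolynomial.C p) Vvar B).coeff e = 0 := by
  rw [substUV, MvPolynomial.aeval_def, MvPolynomial.eval₂_eq']
  rw [AddMonoidAlgebra.coeff_sum, Finset.sum_apply']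
  apply Finset.sum_eq_zero
  intro m hm
  have hml : (m 1 : ℤ) < e := by
    have := MvPolynomial.monomial_le_degreeOf 1 hm
    omega
  have hprod : (∏ i : Fin 2,
      (if i = 0 then LaurentPolynomial.C p else Vvar) ^ m i)
      = LaurentPolynomial.C (p ^ m 0) * T ((m 1 : ℤ)) := by
    rw [Fin.prod_univ_two]
    norm_num
    rw [Vvar_pow]
    exact Or.inl rfl
  rw [hprod, intCast_eq, ← mul_assoc, ← map_mul, ← single_eq_C_mul_T,
    AddMonoidAlgebra.coeff_single, Finsupp.single_apply]
  rw [if_neg (by omega)]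


lemma unique {P : Type*} [Fintype P] (le : P → P → Prop) (rk : P → ℕ)
    (hrefl : ∀ a, le a a)
    (hstrict : ∀ a b, le a b → a ≠ b → rk a < rk b)
    (F G : P → P → LaurentTwo)
    (h0 : ∀ a b, le a b → rk b = rk a → F a b = G a b)
    (hbF : ∀ a b, le a b → rk a < rk b → ∀ e : ℤ,
      ((rk b - rk a : ℕ) : ℤ) ≤ 2 * e → (F a b).coeff e = 0)
    (hbG : ∀ a b, le a b → rk a < rk b → ∀ e : ℤ,
      ((rk b - rk a : ℕ) : ℤ) ≤ 2 * e → (G a b).coeff e = 0)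
    (hrF : ∀ a b, le a b →
      (∑ z : P, if le a z ∧ le z b then
          ιh (F a z) * (Uvar * Vvar) ^ (rk z - rk a) * (Vvar - Uvar) ^ (rk b - rk z) else 0)
      = ∑ z : P, if le a z ∧ le z b then F z b * (Uvar * Vvar - 1) ^ (rk z - rk a) else 0)
    (hrG : ∀ a b, le a b →
      (∑ z : P, if le a z ∧ le z b then
          ιh (G a z) * (Uvar * Vvar) ^ (rk z - rk a) * (Vvar - Uvar) ^ (rk b - rk z) else 0)
      = ∑ z : P, if le a z ∧ le z b then G z b * (Uvar * Vvar - 1) ^ (rk z - rk a) else 0) :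
    ∀ a b, le a b → F a b = G a b := by
  have key : ∀ n : ℕ, ∀ a b, le a b → rk b - rk a = n → F a b = G a b := by
    intro n
    induction n using Nat.strong_induction_on with
    | _ n IH =>
      intro a b hab hn
      by_cases heq : rk b = rk a
      · exact h0 a b hab heq
      have hlt : rk a < rk b := by
        rcases eq_or_ne a b with rfl | hne
        · exact absurd rfl heq
        · exact hstrict a b hab hne
      have hnpos : 0 < n := by omega
      have hrkle : ∀ z, le a z → rk a ≤ rk z := by
        intro z hz
        rcases eq_or_ne a z with rfl | h
        · exact le_rfl
        · exact (hstrict a z hz h).le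
      have hrkle' : ∀ z, le z b → rk z ≤ rk b := by
        intro z hz
        rcases eq_or_ne z b with rfl | h
        · exact le_rfl
        · exact (hstrict z b hz h).le
      have hL : (∑ z : P, if le a z ∧ le z b then
            ιh (F a z) * (Uvar * Vvar) ^ (rk z - rk a) * (Vvar - Uvar) ^ (rk b - rk z) else 0)
          - (∑ z : P, if le a z ∧ le z b then
            ιh (G a z) * (Uvar * Vvar) ^ (rk z - rk a) * (Vvar - Uvar) ^ (rk b - rk z) else 0)
          = ιh (F a b - G a b) * (Uvar * Vvar) ^ n := by
        rw [← Finset.sum_sub_distrib, Finset.sum_eq_single b]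
        · simp only [if_pos (show le a b ∧ le b b from ⟨hab, hrefl b⟩), Nat.sub_self,
            pow_zero, mul_one, hn, map_sub, sub_mul]
        · intro z _ hzb
          by_cases hc : le a z ∧ le z b
          · have hstep : F a z = G a z := by
              apply IH (rk z - rk a) _ a z hc.1 rfl
              have := hstrict z b hc.2 hzb
              have := hrkle z hc.1
              omega
            rw [if_pos hc, if_pos hc, hstep, sub_self]
          · rw [if_neg hc, if_neg hc, sub_self]
        · intro h; exact absurd (Finset.mem_univ b) h
      have hR : (∑ z : P, if le a z ∧ le z b then
            F z b * (Uvar * Vvar - 1) ^ (rk z - rk a) else 0)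
          - (∑ z : P, if le a z ∧ le z b then
            G z b * (Uvar * Vvar - 1) ^ (rk z - rk a) else 0)
          = F a b - G a b := by
        rw [← Finset.sum_sub_distrib, Finset.sum_eq_single a]
        · simp only [if_pos (show le a a ∧ le a b from ⟨hrefl a, hab⟩), Nat.sub_self,
            pow_zero, mul_one]
        · intro z _ hza
          by_cases hc : le a z ∧ le z b
          · have hstep : F z b = G z b := by
              apply IH (rk b - rk z) _ z b hc.2 rfl
              have := hstrict a z hc.1 (Ne.symm hza)
              have := hrkle' z hc.2
              omega
            rw [if_pos hc, if_pos hc, hstep, sub_self]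
          · rw [if_neg hc, if_neg hc, sub_self]
        · intro h; exact absurd (Finset.mem_univ a) h
      have hE : ιh (F a b - G a b) * (Uvar * Vvar) ^ n = F a b - G a b := by
        rw [← hL, ← hR, hrF a b hab, hrG a b hab]
      set D := F a b - G a b with hD
      have hDbound : ∀ e : ℤ, D.coeff e ≠ 0 → 2 * e < (n : ℤ) := by
        intro e hne
        by_contra hge
        push_neg at hge
        have h1 := hbF a b hab hlt e (by omega)
        have h2 := hbG a b hab hlt e (by omega)
        apply hne
        rw [hD, AddMonoidAlgebra.coeff_sub, Finsupp.sub_apply, h1, h2, sub_zero]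
      have hD0 : D = 0 := by
        apply LaurentPolynomial.ext
        intro e
        rw [AddMonoidAlgebra.coeff_zero, Finsupp.coe_zero, Pi.zero_apply]
        by_contra hne
        have he1 : 2 * e < (n : ℤ) := hDbound e hne
        have hcoef : D.coeff e = T (n : ℤ) * invert (D.coeff ((n : ℤ) - e)) := by
          conv_lhs => rw [← hE]
          have hre : ιh D * (Uvar * Vvar) ^ n
              = LaurentPolynomial.C (T (n : ℤ)) * ((T (n : ℤ) : LaurentTwo) * ιh D) := by
            rw [mul_pow, Uvar_pow, Vvar_pow]; ring
          rw [hre, Cmul_coeff, Tmul_coeff, ιh_apply, neg_sub]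
        have he2 : D.coeff ((n : ℤ) - e) ≠ 0 := by
          intro h0'
          rw [h0', map_zero, mul_zero] at hcoef
          exact hne hcoef
        have he3 := hDbound _ he2
        omega
      have := sub_eq_zero.mp hD0
      exact this
  intro a b hab
  exact key (rk b - rk a) a b hab rfl


lemma e_base1 : (UvarInv * Vvar) * Uvar = Vvar := by
  linear_combination Vvar * hUU

lemma e_base2 : (Vvar - UvarInv) * Uvar = Uvar * Vvar - 1 := by
  linear_combination (-1 : LaurentTwo) * hUU

lemma e_base3 : (UvarInv * Vvar - 1) * Uvar = Vvar - Uvar := by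
  linear_combination Vvar * hUU

lemma e_base4 : (-Uvar) * (UvarInv * VvarInv) * ((-1) * (Uvar * Vvar)) = Uvar := by
  linear_combination Uvar * hUU + Uvar * Uvar * UvarInv * hVV

lemma e_base5 : (VvarInv - UvarInv) * ((-1) * (Uvar * Vvar)) = Vvar - Uvar := by
  linear_combination Vvar * hUU - Uvar * hVV

lemma e_base6 : (-UvarInv) * ((-1) * (Uvar * Vvar)) = Vvar := by
  linear_combination Vvar * hUU

lemma e_base7 : (UvarInv * VvarInv - 1) * ((-1) * (Uvar * Vvar)) = Uvar * Vvar - 1 := by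
  linear_combination (-(Vvar * VvarInv)) * hUU - hVV

lemma A1 (a b : ℕ) (S : LaurentTwo) :
    S * (UvarInv * Vvar) ^ b * (Vvar - UvarInv) ^ a * Uvar ^ (a + b)
      = S * Vvar ^ b * (Uvar * Vvar - 1) ^ a := by
  calc S * (UvarInv * Vvar) ^ b * (Vvar - UvarInv) ^ a * Uvar ^ (a + b)
      = S * ((UvarInv * Vvar) * Uvar) ^ b * ((Vvar - UvarInv) * Uvar) ^ a := by
        simp only [pow_add, mul_pow]; ring
    _ = _ := by rw [e_base1, e_base2]

lemma A2 (a b : ℕ) (S : LaurentTwo) :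
    S * (UvarInv * Vvar - 1) ^ b * Uvar ^ (a + b)
      = S * Uvar ^ a * (Vvar - Uvar) ^ b := by
  calc S * (UvarInv * Vvar - 1) ^ b * Uvar ^ (a + b)
      = S * Uvar ^ a * ((UvarInv * Vvar - 1) * Uvar) ^ b := by
        simp only [pow_add, mul_pow]; ring
    _ = _ := by rw [e_base3]

lemma A3 (a b : ℕ) (S : LaurentTwo) :
    (-Uvar) ^ a * S * (UvarInv * VvarInv) ^ a * (VvarInv - UvarInv) ^ b
        * ((-1) * (Uvar * Vvar)) ^ (a + b)
      = S * Uvar ^ a * (Vvar - Uvar) ^ b := by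
  calc (-Uvar) ^ a * S * (UvarInv * VvarInv) ^ a * (VvarInv - UvarInv) ^ b
        * ((-1) * (Uvar * Vvar)) ^ (a + b)
      = S * ((-Uvar) * (UvarInv * VvarInv) * ((-1) * (Uvar * Vvar))) ^ a
          * ((VvarInv - UvarInv) * ((-1) * (Uvar * Vvar))) ^ b := by
        simp only [pow_add, mul_pow]; ring
    _ = _ := by rw [e_base4, e_base5]

lemma A4 (a b : ℕ) (S : LaurentTwo) :
    (-UvarInv) ^ b * S * (UvarInv * VvarInv - 1) ^ a
        * ((-1) * (Uvar * Vvar)) ^ (a + b)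
      = S * Vvar ^ b * (Uvar * Vvar - 1) ^ a := by
  calc (-UvarInv) ^ b * S * (UvarInv * VvarInv - 1) ^ a
        * ((-1) * (Uvar * Vvar)) ^ (a + b)
      = S * ((-UvarInv) * ((-1) * (Uvar * Vvar))) ^ b
          * ((UvarInv * VvarInv - 1) * ((-1) * (Uvar * Vvar))) ^ a := by
        simp only [pow_add, mul_pow]; ring
    _ = _ := by rw [e_base6, e_base7]

lemma W_unit : IsUnit ((-1 : LaurentTwo) * (Uvar * Vvar)) := by
  apply IsUnit.of_mul_eq_one ((-1 : LaurentTwo) * (UvarInv * VvarInv))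
  linear_combination (Vvar * VvarInv) * hUU + hVV

lemma negU_pow (n : ℕ) :
    (-Uvar) ^ n = LaurentPolynomial.C ((-1) ^ n * T (n : ℤ)) := by
  conv_lhs => rw [neg_pow Uvar n]
  rw [map_mul, map_pow, map_neg, map_one, Uvar_pow]

@[simp] lemma ιh_subst (p q : LaurentTwo) (B : MvPolynomial (Fin 2) ℤ) :
    ιh (substUV p q B) = substUV (ιh p) (ιh q) B := subst_hom ιh p q B

@[simp] lemma σh_subst (p q : LaurentTwo) (B : MvPolynomial (Fin 2) ℤ) :
    σh (substUV p q B) = substUV (σh p) (σh q) B := subst_hom σh p q B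

lemma subst_one (p q : LaurentTwo) : substUV p q 1 = 1 := map_one _

end BDualAux

/-- A `B`-family on a finite set `P` with order relation `le` and rank function `rk`:
an assignment of a polynomial `B x y ∈ ℤ[u,v]` (where `u` is the variable `0` and `v`
is the variable `1`) to every interval `[x,y]` such that
(1) `B x y = 1` on rank-zero intervals,
(2) the `v`-degree of `B x y` is strictly less than `(rk y - rk x)/2` on intervals of
positive rank, and
(3) for every interval `[x,y]` the identity
`Σ_{x ≤ z ≤ y} B([x,z]; u⁻¹, v⁻¹) (uv)^{ρ(z)-ρ(x)} (v-u)^{ρ(y)-ρ(z)}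
  = Σ_{x ≤ z ≤ y} B([z,y]; u, v) (uv-1)^{ρ(z)-ρ(x)}`
holds in `ℤ[u^{±1}, v^{±1}]`. -/
def IsBFamily {P : Type*} [Fintype P] (le : P → P → Prop) (rk : P → ℕ)
    (B : P → P → MvPolynomial (Fin 2) ℤ) : Prop :=
  (∀ x y : P, le x y → rk y = rk x → B x y = 1) ∧
  (∀ x y : P, le x y → rk x < rk y →
      2 * (B x y).degreeOf 1 < rk y - rk x) ∧
  (∀ x y : P, le x y →
      (∑ z : P, if le x z ∧ le z y then
          substUV UvarInv VvarInv (B x z) * (Uvar * Vvar) ^ (rk z - rk x)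
            * (Vvar - Uvar) ^ (rk y - rk z)
        else 0)
      = ∑ z : P, if le x z ∧ le z y then
          substUV Uvar Vvar (B z y) * (Uvar * Vvar - 1) ^ (rk z - rk x)
        else 0)
open BDualAux LaurentPolynomial

/-- Remark 5.3: for a finite Eulerian poset `P` of rank `d` with a
`B`-family `B`, and a `B`-family `Bs` for the dual poset (reversed order, rank
function `d - ρ`), one has `B(P; u, v) = (-u)^d Bs(P*; u⁻¹, v)` in `ℤ[u^{±1}, v^{±1}]`. -/
theorem bPolynomial_dual {P : Type*} [Fintype P] [PartialOrder P] [BoundedOrder P]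
    [GradeBoundedOrder ℕ P] (d : ℕ) (hd : grade ℕ (⊤ : P) = d)
    (heuler : ∀ x y : P, x ≤ y → x ≠ y →
      (Finset.univ.filter
        (fun z => x ≤ z ∧ z ≤ y ∧ Even (grade ℕ z - grade ℕ x))).card =
      (Finset.univ.filter
        (fun z => x ≤ z ∧ z ≤ y ∧ ¬ Even (grade ℕ z - grade ℕ x))).card)
    (B Bs : P → P → MvPolynomial (Fin 2) ℤ)
    (hB : IsBFamily (· ≤ ·) (grade ℕ) B)
    (hBs : IsBFamily (fun x y => y ≤ x) (fun x => d - grade ℕ x) Bs) :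
    substUV Uvar Vvar (B ⊥ ⊤) = (-Uvar) ^ d * substUV UvarInv Vvar (Bs ⊤ ⊥) := by
  classical
  obtain ⟨hB1, hB2, hB3⟩ := hB
  obtain ⟨hBs1, hBs2, hBs3⟩ := hBs
  have hρd : ∀ z : P, grade ℕ z ≤ d := by
    intro z
    have h := (grade_strictMono (𝕆 := ℕ) (α := P)).monotone (le_top (a := z))
    rwa [hd] at h
  have hmono : ∀ {u w : P}, u ≤ w → grade ℕ u ≤ grade ℕ w :=
    fun h => (grade_strictMono (𝕆 := ℕ)).monotone h
  have hstrict : ∀ u w : P, u ≤ w → u ≠ w → grade ℕ u < grade ℕ w :=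
    fun u w h hne => grade_strictMono (lt_of_le_of_ne h hne)
  -- the two candidate families
  have h0 : ∀ u w : P, u ≤ w → grade ℕ w = grade ℕ u →
      substUV Uvar Vvar (B u w)
        = (-Uvar) ^ (grade ℕ w - grade ℕ u) * substUV UvarInv Vvar (Bs w u) := by
    intro u w huw heq
    have hb := hB1 u w huw heq
    have hbs := hBs1 w u huw (by simp only; omega)
    rw [hb, hbs, subst_one, subst_one, show grade ℕ w - grade ℕ u = 0 by omega,
      pow_zero, mul_one]
  have hbF : ∀ u w : P, u ≤ w → grade ℕ u < grade ℕ w → ∀ e : ℤ,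
      ((grade ℕ w - grade ℕ u : ℕ) : ℤ) ≤ 2 * e → (substUV Uvar Vvar (B u w)).coeff e = 0 := by
    intro u w huw hlt e he
    have hdeg := hB2 u w huw hlt
    exact subst_C_coeff_eq_zero (T 1) (B u w) e (by omega)
  have hbG : ∀ u w : P, u ≤ w → grade ℕ u < grade ℕ w → ∀ e : ℤ,
      ((grade ℕ w - grade ℕ u : ℕ) : ℤ) ≤ 2 * e →
      ((-Uvar) ^ (grade ℕ w - grade ℕ u) * substUV UvarInv Vvar (Bs w u)).coeff e = 0 := by
    intro u w huw hlt e he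
    have hdeg := hBs2 w u huw (by simp only; have := hρd w; omega)
    simp only at hdeg
    have hexp : d - grade ℕ u - (d - grade ℕ w) = grade ℕ w - grade ℕ u := by
      have := hρd w; omega
    rw [hexp] at hdeg
    have h2 : (substUV UvarInv Vvar (Bs w u)).coeff e = 0 :=
      subst_C_coeff_eq_zero (T (-1)) (Bs w u) e (by omega)
    rw [negU_pow, Cmul_coeff, h2, mul_zero]
  have hrF : ∀ u w : P, u ≤ w →
      (∑ z : P, if u ≤ z ∧ z ≤ w then
          ιh (substUV Uvar Vvar (B u z)) * (Uvar * Vvar) ^ (grade ℕ z - grade ℕ u)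
            * (Vvar - Uvar) ^ (grade ℕ w - grade ℕ z) else 0)
      = ∑ z : P, if u ≤ z ∧ z ≤ w then
          substUV Uvar Vvar (B z w) * (Uvar * Vvar - 1) ^ (grade ℕ z - grade ℕ u) else 0 := by
    intro u w huw
    have h := hB3 u w huw
    refine Eq.trans (Finset.sum_congr rfl fun z _ => ?_) h
    by_cases hc : u ≤ z ∧ z ≤ w
    · rw [if_pos hc, if_pos hc, ιh_subst, ιh_Uvar, ιh_Vvar]
    · rw [if_neg hc, if_neg hc]
  have hrG : ∀ u w : P, u ≤ w →
      (∑ z : P, if u ≤ z ∧ z ≤ w then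
          ιh ((-Uvar) ^ (grade ℕ z - grade ℕ u) * substUV UvarInv Vvar (Bs z u))
            * (Uvar * Vvar) ^ (grade ℕ z - grade ℕ u)
            * (Vvar - Uvar) ^ (grade ℕ w - grade ℕ z) else 0)
      = ∑ z : P, if u ≤ z ∧ z ≤ w then
          (-Uvar) ^ (grade ℕ w - grade ℕ z) * substUV UvarInv Vvar (Bs w z)
            * (Uvar * Vvar - 1) ^ (grade ℕ z - grade ℕ u) else 0 := by
    intro u w huw
    have hsrc := hBs3 w u huw
    simp only at hsrc
    -- step 1 : apply σh and multiply with Uvar ^ N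
    have hstep : (∑ z : P, if z ≤ w ∧ u ≤ z then
          substUV Uvar VvarInv (Bs w z) * Vvar ^ (grade ℕ w - grade ℕ z)
            * (Uvar * Vvar - 1) ^ (grade ℕ z - grade ℕ u) else 0)
        = ∑ z : P, if z ≤ w ∧ u ≤ z then
          substUV UvarInv Vvar (Bs z u) * Uvar ^ (grade ℕ z - grade ℕ u)
            * (Vvar - Uvar) ^ (grade ℕ w - grade ℕ z) else 0 := by
      have h1 := congrArg (fun t : LaurentTwo => σh t * Uvar ^ (grade ℕ w - grade ℕ u)) hsrc
      rw [map_sum, map_sum, Finset.sum_mul, Finset.sum_mul] at h1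
      refine Eq.trans (Finset.sum_congr rfl fun z _ => ?_)
        (h1.trans (Finset.sum_congr rfl fun z _ => ?_))
      · by_cases hc : z ≤ w ∧ u ≤ z
        · rw [if_pos hc, if_pos hc]
          have e1 : d - grade ℕ z - (d - grade ℕ w) = grade ℕ w - grade ℕ z := by
            have := hρd w; have := hmono hc.1; omega
          have e2 : d - grade ℕ u - (d - grade ℕ z) = grade ℕ z - grade ℕ u := by
            have := hρd z; have := hmono hc.2; omega
          have eN : grade ℕ w - grade ℕ u
              = (grade ℕ z - grade ℕ u) + (grade ℕ w - grade ℕ z) := by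
            have := hmono hc.1; have := hmono hc.2; omega
          rw [e1, e2, eN]
          simp only [map_mul, map_pow, map_sub, σh_subst, σh_Uvar, σh_UvarInv, σh_Vvar,
            σh_VvarInv]
          exact (A1 (grade ℕ z - grade ℕ u) (grade ℕ w - grade ℕ z)
            (substUV Uvar VvarInv (Bs w z))).symm
        · rw [if_neg hc, if_neg hc, map_zero, zero_mul]
      · by_cases hc : z ≤ w ∧ u ≤ z
        · rw [if_pos hc, if_pos hc]
          have e1 : d - grade ℕ z - (d - grade ℕ w) = grade ℕ w - grade ℕ z := by
            have := hρd w; have := hmono hc.1; omega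
          have eN : grade ℕ w - grade ℕ u
              = (grade ℕ z - grade ℕ u) + (grade ℕ w - grade ℕ z) := by
            have := hmono hc.1; have := hmono hc.2; omega
          rw [e1, eN]
          simp only [map_mul, map_pow, map_sub, map_one, σh_subst, σh_Uvar, σh_UvarInv,
            σh_Vvar, σh_VvarInv]
          exact A2 (grade ℕ z - grade ℕ u) (grade ℕ w - grade ℕ z)
            (substUV UvarInv Vvar (Bs z u))
        · rw [if_neg hc, if_neg hc, map_zero, zero_mul]
    -- step 2 : the goal follows from hstep by applying ιh and multiplying by a unit
    have hWu : IsUnit (((-1 : LaurentTwo) * (Uvar * Vvar)) ^ (grade ℕ w - grade ℕ u)) :=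
      W_unit.pow _
    apply ιh_injective
    apply hWu.mul_right_cancel
    have hA : ιh (∑ z : P, if u ≤ z ∧ z ≤ w then
          ιh ((-Uvar) ^ (grade ℕ z - grade ℕ u) * substUV UvarInv Vvar (Bs z u))
            * (Uvar * Vvar) ^ (grade ℕ z - grade ℕ u)
            * (Vvar - Uvar) ^ (grade ℕ w - grade ℕ z) else 0)
          * ((-1 : LaurentTwo) * (Uvar * Vvar)) ^ (grade ℕ w - grade ℕ u)
        = ∑ z : P, if z ≤ w ∧ u ≤ z then
          substUV UvarInv Vvar (Bs z u) * Uvar ^ (grade ℕ z - grade ℕ u)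
            * (Vvar - Uvar) ^ (grade ℕ w - grade ℕ z) else 0 := by
      rw [map_sum, Finset.sum_mul]
      refine Finset.sum_congr rfl fun z _ => ?_
      by_cases hc : u ≤ z ∧ z ≤ w
      · rw [if_pos hc, if_pos ⟨hc.2, hc.1⟩]
        have eN : grade ℕ w - grade ℕ u
            = (grade ℕ z - grade ℕ u) + (grade ℕ w - grade ℕ z) := by
          have := hmono hc.1; have := hmono hc.2; omega
        rw [eN]
        simp only [map_mul, map_pow, map_sub, map_neg, ιh_subst, ιh_Uvar, ιh_UvarInv,
          ιh_Vvar, ιh_VvarInv]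
        exact A3 (grade ℕ z - grade ℕ u) (grade ℕ w - grade ℕ z)
          (substUV UvarInv Vvar (Bs z u))
      · rw [if_neg hc, if_neg (fun h => hc ⟨h.2, h.1⟩), map_zero, zero_mul]
    have hB' : ιh (∑ z : P, if u ≤ z ∧ z ≤ w then
          (-Uvar) ^ (grade ℕ w - grade ℕ z) * substUV UvarInv Vvar (Bs w z)
            * (Uvar * Vvar - 1) ^ (grade ℕ z - grade ℕ u) else 0)
          * ((-1 : LaurentTwo) * (Uvar * Vvar)) ^ (grade ℕ w - grade ℕ u)
        = ∑ z : P, if z ≤ w ∧ u ≤ z then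
          substUV Uvar VvarInv (Bs w z) * Vvar ^ (grade ℕ w - grade ℕ z)
            * (Uvar * Vvar - 1) ^ (grade ℕ z - grade ℕ u) else 0 := by
      rw [map_sum, Finset.sum_mul]
      refine Finset.sum_congr rfl fun z _ => ?_
      by_cases hc : u ≤ z ∧ z ≤ w
      · rw [if_pos hc, if_pos ⟨hc.2, hc.1⟩]
        have eN : grade ℕ w - grade ℕ u
            = (grade ℕ z - grade ℕ u) + (grade ℕ w - grade ℕ z) := by
          have := hmono hc.1; have := hmono hc.2; omega
        rw [eN]
        simp only [map_mul, map_pow, map_sub, map_neg, map_one, ιh_subst, ιh_Uvar,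
          ιh_UvarInv, ιh_Vvar, ιh_VvarInv]
        exact A4 (grade ℕ z - grade ℕ u) (grade ℕ w - grade ℕ z)
          (substUV Uvar VvarInv (Bs w z))
      · rw [if_neg hc, if_neg (fun h => hc ⟨h.2, h.1⟩), map_zero, zero_mul]
    rw [hA, hB', hstep]
  have main := BDualAux.unique (P := P) (· ≤ ·) (grade ℕ) le_refl hstrict
    (fun u w => substUV Uvar Vvar (B u w))
    (fun u w => (-Uvar) ^ (grade ℕ w - grade ℕ u) * substUV UvarInv Vvar (Bs w u))
    h0 hbF hbG hrF hrG ⊥ ⊤ bot_le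
  have hb0 : grade ℕ (⊥ : P) = 0 := by
    have := grade_bot (𝕆 := ℕ) (α := P)
    simpa using this
  rw [hd, hb0, Nat.sub_zero] at main
  exact main
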